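/- Let F be a CNF formula over variables X that is symmetric with respect to every permutation in a group G of permutations of X (i.e., π(F) = F for all π ∈ G). Let P be a nonempty set of points falsifying F and g : P → F a transport function such that P is stable modulo symmetry G with respect to F and g: for every p ∈ P, every point p' ∈ Nbhd(p, g(p)) either belongs to P or is of the form π(p'') for some π ∈ G and some p'' ∈ P. Then F is unsatisfiable. -/

import Mathlib

/-- A point `p` satisfies a clause `C` (a finite set of literals) if it
satisfies some literal of `C`. -/
def satClause {X : Type*} (p : X → Bool) (C : Finset (X × Bool)) : Prop :=
  ∃ l ∈ C, p l.1 = l.2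

/-- The 1-neighborhood of a point `p` with respect to a clause `C`: points
differing from `p` in exactly one variable that satisfy `C`. -/
def Nbhd {X : Type*} (p : X → Bool) (C : Finset (X × Bool)) : Set (X → Bool) :=
  {q | (∃! x, q x ≠ p x) ∧ satClause q C}

/-- The action of a permutation `π` of the variables on a point:
`π(p) = p ∘ π⁻¹`. -/
def permPoint {X : Type*} (π : Equiv.Perm X) (p : X → Bool) : X → Bool :=
  fun x => p (π.symm x)

/-- The action of a permutation `π` of the variables on a clause. -/
def permClause {X : Type*} [DecidableEq X] (π : Equiv.Perm X)
    (C : Finset (X × Bool)) : Finset (X × Bool) :=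
  C.image fun l => (π l.1, l.2)

/-- Hamming distance between two points. -/
def hdist {X : Type*} [Fintype X] [DecidableEq X] (p q : X → Bool) : ℕ :=
  (Finset.univ.filter fun x => p x ≠ q x).card

lemma hdist_perm {X : Type*} [Fintype X] [DecidableEq X] (σ : Equiv.Perm X)
    (p q : X → Bool) : hdist (permPoint σ p) (permPoint σ q) = hdist p q := by
  unfold hdist
  apply Finset.card_bij' (fun x _ => σ.symm x) (fun x _ => σ x) <;>
    simp only [Finset.mem_filter, Finset.mem_univ, true_and] <;> simp [permPoint]

lemma permPoint_mul {X : Type*} (σ τ : Equiv.Perm X) (p : X → Bool) :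
    permPoint σ (permPoint τ p) = permPoint (σ * τ) p := by
  funext x
  rfl

theorem stmt_6 {X : Type*} [Fintype X] [DecidableEq X]
    (F : Finset (Finset (X × Bool)))
    (hF : ∀ C ∈ F, ∀ l₁ ∈ C, ∀ l₂ ∈ C, (l₁ : X × Bool).1 = (l₂ : X × Bool).1 → l₁ = l₂)
    (G : Subgroup (Equiv.Perm X))
    -- `F` is symmetric with respect to every permutation of `G`
    (hsym : ∀ π ∈ G, F.image (permClause π) = F)
    (P : Set (X → Bool)) (hP : P.Nonempty)
    (g : (X → Bool) → Finset (X × Bool))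
    -- `g` is a transport function on `P`
    (hg : ∀ p ∈ P, g p ∈ F ∧ ¬ satClause p (g p))
    -- `P` is stable modulo symmetry `G` with respect to `F` and `g`
    (hstab : ∀ p ∈ P, ∀ p' ∈ Nbhd p (g p),
        p' ∈ P ∨ ∃ π ∈ G, ∃ p'' ∈ P, p' = permPoint π p'') :
    ¬ ∃ p : X → Bool, ∀ C ∈ F, satClause p C := by
  rintro ⟨s, hs⟩
  -- permuted copies of s also satisfy F
  have hsat : ∀ π ∈ G, ∀ C ∈ F, satClause (permPoint π s) C := by
    intro π hπ C hC
    rw [← hsym π hπ] at hC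
    obtain ⟨C', hC', rfl⟩ := Finset.mem_image.mp hC
    obtain ⟨l, hl, hsl⟩ := hs C' hC'
    exact ⟨(π l.1, l.2), Finset.mem_image_of_mem _ hl, by simpa [permPoint] using hsl⟩
  -- measure
  set μ : (X → Bool) → ℕ := fun p => sInf {n | ∃ π ∈ G, hdist p (permPoint π s) = n} with hμ
  have hμne : ∀ p : X → Bool, {n | ∃ π ∈ G, hdist p (permPoint π s) = n}.Nonempty :=
    fun p => ⟨_, 1, one_mem G, rfl⟩
  have hμle : ∀ (p : X → Bool) (π : Equiv.Perm X), π ∈ G → μ p ≤ hdist p (permPoint π s) :=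
    fun p π hπ => Nat.sInf_le ⟨π, hπ, rfl⟩
  -- pick p ∈ P with μ p minimal
  have hSne : {n | ∃ p ∈ P, μ p = n}.Nonempty := by
    obtain ⟨p0, hp0⟩ := hP
    exact ⟨μ p0, p0, hp0, rfl⟩
  obtain ⟨p, hpP, hpmin⟩ : ∃ p ∈ P, μ p = sInf {n | ∃ p ∈ P, μ p = n} :=
    Nat.sInf_mem hSne
  have hmin : ∀ q ∈ P, μ p ≤ μ q := by
    intro q hq
    rw [hpmin]
    exact Nat.sInf_le ⟨q, hq, rfl⟩
  obtain ⟨π, hπG, hπd⟩ : ∃ π ∈ G, hdist p (permPoint π s) = μ p := Nat.sInf_mem (hμne p)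
  obtain ⟨hgF, hgfals⟩ := hg p hpP
  obtain ⟨l, hl, hsl⟩ := hsat π hπG (g p) hgF
  have hpl : p l.1 ≠ l.2 := fun h => hgfals ⟨l, hl, h⟩
  set q : X → Bool := Function.update p l.1 l.2 with hq
  have hqx : ∀ x, x ≠ l.1 → q x = p x := fun x hx => Function.update_of_ne hx _ _
  have hql : q l.1 = l.2 := Function.update_self _ _ _
  have hqN : q ∈ Nbhd p (g p) := by
    refine ⟨⟨l.1, by simp [hql, hpl, Ne.symm hpl], ?_⟩, ⟨l, hl, hql⟩⟩
    intro y hy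
    by_contra hne
    exact hy (hqx y hne)
  -- q is strictly closer to permPoint π s
  have hqd : hdist q (permPoint π s) < hdist p (permPoint π s) := by
    unfold hdist
    apply Finset.card_lt_card
    constructor
    · intro x hx
      simp only [Finset.mem_filter, Finset.mem_univ, true_and] at hx ⊢
      rcases eq_or_ne x l.1 with rfl | hne
      · exact absurd (hql.trans hsl.symm) hx
      · rw [← hqx x hne]; exact hx
    · intro hsub
      have : l.1 ∈ Finset.univ.filter fun x => p x ≠ permPoint π s x := by
        simp only [Finset.mem_filter, Finset.mem_univ, true_and]
        rw [hsl]; exact hpl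
      have := hsub this
      simp only [Finset.mem_filter, Finset.mem_univ, true_and] at this
      exact this (hql.trans hsl.symm)
  rcases hstab p hpP q hqN with hqP | ⟨σ, hσG, p'', hp''P, hqeq⟩
  · have := hmin q hqP
    have h2 := hμle q π hπG
    omega
  · have hd : hdist p'' (permPoint (σ⁻¹ * π) s) = hdist q (permPoint π s) := by
      rw [← hdist_perm σ, permPoint_mul, ← hqeq]
      congr 1
      group
    have h1 := hμle p'' (σ⁻¹ * π) (mul_mem (inv_mem hσG) hπG)
    have h2 := hmin p'' hp''P
    omega
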